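/- If C is an effect on a Hilbert space H with C ≤ E and C ≤ F, where E and F are rank-one effects with distinct one-dimensional ranges, then C = 0. -/

import Mathlib

variable {H : Type*} [NormedAddCommGroup H] [InnerProductSpace ℂ H] [CompleteSpace H]

open scoped InnerProductSpace ComplexConjugate

/-- If `T` is a positive operator and `re ⟪T x, x⟫ = 0`, then `T x = 0`. -/
lemma isPositive_apply_eq_zero_of_re_inner_eq_zero {T : H →L[ℂ] H}
    (hT : T.IsPositive) {x : H} (hx : Complex.re ⟪T x, x⟫_ℂ = 0) : T x = 0 := by
  have hsymm0 := hT.1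
  have hsymm : ∀ a b : H, ⟪T a, b⟫_ℂ = ⟪a, T b⟫_ℂ := fun a b => hsymm0 a b
  have key : ∀ y : H, Complex.re ⟪T x, y⟫_ℂ = 0 := by
    intro y
    set s : ℝ := Complex.re ⟪T x, y⟫_ℂ with hs
    set q : ℝ := Complex.re ⟪T y, y⟫_ℂ with hq
    have hq0 : 0 ≤ q := hT.re_inner_nonneg_left y
    have expand : ∀ t : ℝ, 0 ≤ q * (t * t) + (2 * s) * t + 0 := by
      intro t
      have h0 := hT.re_inner_nonneg_left (x + (t : ℂ) • y)
      have hTs : ⟪T y, x⟫_ℂ = conj ⟪T x, y⟫_ℂ := by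
        rw [hsymm y x]
        exact (inner_conj_symm y (T x)).symm
      have hcalc : ⟪T (x + (t : ℂ) • y), x + (t : ℂ) • y⟫_ℂ
          = ⟪T x, x⟫_ℂ + (t : ℂ) * ⟪T x, y⟫_ℂ + (t : ℂ) * ⟪T y, x⟫_ℂ
            + (t : ℂ) * (t : ℂ) * ⟪T y, y⟫_ℂ := by
        rw [map_add, map_smul, inner_add_left, inner_add_right, inner_add_right,
          inner_smul_left, inner_smul_right, inner_smul_left, inner_smul_right]
        simp only [Complex.conj_ofReal]
        ring
      have hre : Complex.re (⟪T x, x⟫_ℂ + (t : ℂ) * ⟪T x, y⟫_ℂ + (t : ℂ) * ⟪T y, x⟫_ℂ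
            + (t : ℂ) * (t : ℂ) * ⟪T y, y⟫_ℂ) = q * (t * t) + (2 * s) * t + 0 := by
        rw [hTs]
        simp only [Complex.add_re, Complex.mul_re, Complex.ofReal_re, Complex.ofReal_im,
          Complex.conj_re, Complex.conj_im, hx, zero_mul, mul_zero, sub_zero, ← hs, ← hq,
          ← Complex.ofReal_pow, Complex.ofReal_im]
        simp only [pow_two, Complex.mul_im, Complex.ofReal_re, Complex.ofReal_im, zero_mul,
          mul_zero, add_zero]
        ring
      rw [hcalc] at h0
      rw [← hre]
      exact h0
    have hd := discrim_le_zero expand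
    rw [discrim] at hd
    nlinarith [hd, sq_nonneg s]
  have key2 : ⟪T x, T x⟫_ℂ = 0 := by
    have hre := key (T x)
    have him : Complex.im ⟪T x, T x⟫_ℂ = 0 := by
      have h := key (Complex.I • T x)
      rw [inner_smul_right] at h
      simpa [Complex.mul_re] using h
    exact Complex.ext (by simpa using hre) (by simpa using him)
  exact inner_self_eq_zero.mp key2

/-- If the range has `finrank` one, we get a spanning vector. -/
lemma range_eq_span_of_finrank_one {T : H →L[ℂ] H}
    (h : Module.finrank ℂ (LinearMap.range (T : H →ₗ[ℂ] H)) = 1) :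
    ∃ u : H, u ≠ 0 ∧ LinearMap.range (T : H →ₗ[ℂ] H) = Submodule.span ℂ {u} := by
  obtain ⟨v, hv0, hv⟩ := finrank_eq_one_iff'.mp h
  refine ⟨(v : H), by simpa using Subtype.coe_injective.ne hv0, le_antisymm ?_ ?_⟩
  · rintro x hx
    obtain ⟨c, hc⟩ := hv ⟨x, hx⟩
    rw [Submodule.mem_span_singleton]
    exact ⟨c, congrArg Subtype.val hc⟩
  · rw [Submodule.span_singleton_le_iff_mem]
    exact v.2

/-- An effect on a Hilbert space: a positive operator bounded above by the identity. -/
def IsEffect (A : H →L[ℂ] H) : Prop := A.IsPositive ∧ (1 - A).IsPositive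

/-- If an effect `C` is dominated by two rank-one effects with distinct
one-dimensional ranges, then `C = 0`. -/
theorem effect_le_two_rankOne_eq_zero (C E F : H →L[ℂ] H)
    (hC : IsEffect C) (hE : IsEffect E) (hF : IsEffect F)
    (hCE : (E - C).IsPositive) (hCF : (F - C).IsPositive)
    (hrE : Module.finrank ℂ (LinearMap.range (E : H →ₗ[ℂ] H)) = 1)
    (hrF : Module.finrank ℂ (LinearMap.range (F : H →ₗ[ℂ] H)) = 1)
    (hne : LinearMap.range (E : H →ₗ[ℂ] H) ≠ LinearMap.range (F : H →ₗ[ℂ] H)) :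
    C = 0 := by
  obtain ⟨u, hu0, hu⟩ := range_eq_span_of_finrank_one hrE
  obtain ⟨v, hv0, hv⟩ := range_eq_span_of_finrank_one hrF
  -- `u` and `v` are linearly independent
  have hind : ∀ μ : ℂ, u ≠ μ • v := by
    intro μ hμ
    have hμ0 : μ ≠ 0 := by rintro rfl; simp at hμ; exact hu0 hμ
    apply hne
    rw [hu, hv]
    apply le_antisymm
    · rw [Submodule.span_singleton_le_iff_mem, Submodule.mem_span_singleton]
      exact ⟨μ, hμ.symm⟩
    · rw [Submodule.span_singleton_le_iff_mem, Submodule.mem_span_singleton]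
      exact ⟨μ⁻¹, by rw [hμ, smul_smul, inv_mul_cancel₀ hμ0, one_smul]⟩
  -- generic step: if `C ≤ T`, `range T = span {w}`, and `⟪x, w⟫ = 0`, then `C x = 0`
  have step : ∀ (T : H →L[ℂ] H) (w : H),
      (T - C).IsPositive → LinearMap.range (T : H →ₗ[ℂ] H) = Submodule.span ℂ {w} →
      ∀ x : H, ⟪x, w⟫_ℂ = 0 → C x = 0 := by
    intro T w hCT hw x hxw
    have hTx : ⟪T x, x⟫_ℂ = 0 := by
      have hmem : T x ∈ Submodule.span ℂ {w} := by
        rw [← hw]; exact LinearMap.mem_range_self _ x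
      obtain ⟨c, hc⟩ := Submodule.mem_span_singleton.mp hmem
      have hwx : ⟪w, x⟫_ℂ = 0 := by
        rw [← inner_conj_symm, hxw, map_zero]
      rw [← hc, inner_smul_left, hwx, mul_zero]
    have h1 := hCT.re_inner_nonneg_left x
    have h2 := hC.1.re_inner_nonneg_left x
    rw [ContinuousLinearMap.sub_apply, inner_sub_left, map_sub, hTx] at h1
    have h1' : Complex.re ⟪C x, x⟫_ℂ ≤ 0 := by
      have : (0 : ℝ) ≤ 0 - Complex.re ⟪C x, x⟫_ℂ := by simpa using h1
      linarith
    exact isPositive_apply_eq_zero_of_re_inner_eq_zero hC.1 (le_antisymm h1' h2)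
  -- decompose an arbitrary `z` as `a + b` with `⟪a, u⟫ = 0`, `⟪b, v⟫ = 0`
  ext z
  simp only [ContinuousLinearMap.zero_apply]
  set w : H := u - ((⟪v, u⟫_ℂ / (‖v‖ : ℂ) ^ 2)) • v with hwdef
  have hnv : ((‖v‖ : ℂ) ^ 2) ≠ 0 := by
    exact pow_ne_zero 2 (by exact_mod_cast norm_ne_zero_iff.mpr hv0)
  have hconj : conj (((‖v‖ : ℂ)) ^ 2) = ((‖v‖ : ℂ)) ^ 2 := by
    rw [map_pow, Complex.conj_ofReal]
  have hvv : ⟪v, v⟫_ℂ = ((‖v‖ : ℂ)) ^ 2 := inner_self_eq_norm_sq_to_K v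
  have hwv : ⟪w, v⟫_ℂ = 0 := by
    rw [hwdef, inner_sub_left, inner_smul_left, map_div₀, hconj, inner_conj_symm,
      hvv, div_mul_cancel₀ _ hnv, sub_self]
  have hw0 : w ≠ 0 := by
    intro h
    apply hind (⟪v, u⟫_ℂ / (‖v‖ : ℂ) ^ 2)
    rw [← sub_eq_zero]; exact h
  have hwu : ⟪w, u⟫_ℂ ≠ 0 := by
    have h3 : ⟪w, w⟫_ℂ = ⟪w, u⟫_ℂ := by
      nth_rewrite 2 [hwdef]
      rw [inner_sub_right, inner_smul_right, hwv, mul_zero, sub_zero]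
    rw [← h3]
    exact fun h => hw0 (inner_self_eq_zero.mp h)
  set c : ℂ := conj (⟪z, u⟫_ℂ / ⟪w, u⟫_ℂ) with hcdef
  have hbv : ⟪c • w, v⟫_ℂ = 0 := by rw [inner_smul_left, hwv, mul_zero]
  have hau : ⟪z - c • w, u⟫_ℂ = 0 := by
    rw [inner_sub_left, inner_smul_left, hcdef, Complex.conj_conj,
      div_mul_cancel₀ _ hwu, sub_self]
  have h1 : C (z - c • w) = 0 := step E u hCE hu _ hau
  have h2 : C (c • w) = 0 := step F v hCF hv _ hbv
  have hz : C z = C (z - c • w) + C (c • w) := by rw [← map_add, sub_add_cancel]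
  rw [hz, h1, h2, add_zero]
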